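/- (Convexity of the log-determinant of the regularized log-barrier Hessian) Let c ≥ 0. The function θ ↦ log det( H(θ) + c·I_d ) is convex on Int(K). -/

import Mathlib

open Matrix Real
open scoped BigOperators

/-- The Hessian of the log-barrier function for the polytope `{x | A x ≤ b}`. -/
noncomputable def logBarrierHessian {m d : ℕ} (A : Matrix (Fin m) (Fin d) ℝ) (b : Fin m → ℝ)
    (x : Fin d → ℝ) : Matrix (Fin d) (Fin d) ℝ :=
  ∑ i, ((b i - A.mulVec x i) ^ 2)⁻¹ • Matrix.vecMulVec (A i) (A i)

variable {d : ℕ}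

private lemma aux_sum_single :
    ∑ j : Fin d, Matrix.vecMulVec (Pi.single j (1:ℝ)) (Pi.single j 1)
      = (1 : Matrix (Fin d) (Fin d) ℝ) := by
  ext i k
  simp only [Matrix.sum_apply, Matrix.vecMulVec_apply, Matrix.one_apply]
  rw [Finset.sum_eq_single i]
  · simp [Pi.single_apply, eq_comm]
  · intro j _ hj
    simp [Pi.single_apply, hj.symm]
  · simp

private lemma aux_vecMulVec_mulVec (a x : Fin d → ℝ) :
    Matrix.vecMulVec a a *ᵥ x = (a ⬝ᵥ x) • a := by
  ext j
  simp only [Matrix.mulVec, Matrix.vecMulVec_apply, dotProduct, Pi.smul_apply, smul_eq_mul,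
    Finset.sum_mul]
  exact Finset.sum_congr rfl fun l _ => by ring

set_option linter.unusedSectionVars false

section DetExpand
variable {ι : Type*} [Fintype ι] [DecidableEq ι]

private lemma aux_det_expand (v : ι → Fin d → ℝ) (w : ι → ℝ) :
    (∑ k, w k • Matrix.vecMulVec (v k) (v k)).det
      = ((Nat.factorial d : ℝ))⁻¹ * ∑ r : Fin d → ι,
          (∏ i, w (r i)) * (Matrix.det (Matrix.of fun i j => v (r i) j)) ^ 2 := by
  classical
  set D : (Fin d → ι) → ℝ := fun r => Matrix.det (Matrix.of fun i j => v (r i) j) with hD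
  have h0 : (∑ k, w k • Matrix.vecMulVec (v k) (v k)).det
      = ∑ r : Fin d → ι, (∏ i, w (r i) * v (r i) i) * D r := by
    have hM : (∑ k, w k • Matrix.vecMulVec (v k) (v k))
        = Matrix.of (fun i => ∑ k, (w k * v k i) • v k) := by
      ext i j
      simp [Matrix.sum_apply, Matrix.vecMulVec_apply, Finset.sum_apply, mul_assoc]
    rw [hM]
    have h2 := (Matrix.detRowAlternating (R := ℝ) (n := Fin d)).toMultilinearMap.map_sum
      (g := fun i k => (w k * v k i) • v k)
    calc (Matrix.of fun i => ∑ k, (w k * v k i) • v k).det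
        = ∑ r : Fin d → ι,
            (Matrix.detRowAlternating (R := ℝ) (n := Fin d)).toMultilinearMap
              (fun i => (w (r i) * v (r i) i) • v (r i)) := h2
      _ = ∑ r : Fin d → ι, (∏ i, w (r i) * v (r i) i) •
            (Matrix.detRowAlternating (R := ℝ) (n := Fin d)).toMultilinearMap (fun i => v (r i)) :=
          Finset.sum_congr rfl fun r _ =>
            (Matrix.detRowAlternating (R := ℝ) (n := Fin d)).toMultilinearMap.map_smul_univ _ _
      _ = ∑ r : Fin d → ι, (∏ i, w (r i) * v (r i) i) * D r := by
          refine Finset.sum_congr rfl fun r _ => ?_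
          rw [smul_eq_mul]
          rfl
  have hcomb : ∑ r : Fin d → ι, (∏ i, w (r i)) * (D r) ^ 2
      = (Nat.factorial d : ℝ) * ∑ r : Fin d → ι, (∏ i, w (r i) * v (r i) i) * D r := by
    have hstep : ∀ σ : Equiv.Perm (Fin d),
        (∑ r : Fin d → ι, (∏ i, w (r i)) * D r *
          (((Equiv.Perm.sign σ : ℤ) : ℝ) * ∏ i, v (r (σ i)) i))
          = ∑ r : Fin d → ι, (∏ i, w (r i) * v (r i) i) * D r := by
      intro σ
      have hsgn : ((Equiv.Perm.sign σ : ℤ) : ℝ) * ((Equiv.Perm.sign σ : ℤ) : ℝ) = 1 := by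
        rcases Int.units_eq_one_or (Equiv.Perm.sign σ) with h | h <;> rw [h] <;> norm_num
      rw [← Equiv.sum_comp (Equiv.arrowCongr σ (Equiv.refl ι))
        (fun r : Fin d → ι => (∏ i, w (r i)) * D r *
          (((Equiv.Perm.sign σ : ℤ) : ℝ) * ∏ i, v (r (σ i)) i))]
      refine Finset.sum_congr rfl fun r _ => ?_
      have he : ∀ i, (Equiv.arrowCongr σ (Equiv.refl ι) r) i = r (σ.symm i) := by
        intro i; simp [Equiv.arrowCongr_apply]
      have pw : ∏ i, w ((Equiv.arrowCongr σ (Equiv.refl ι) r) i) = ∏ i, w (r i) := by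
        simp only [he]
        exact Equiv.prod_comp σ.symm (fun i => w (r i))
      have pv : ∏ i, v ((Equiv.arrowCongr σ (Equiv.refl ι) r) (σ i)) i = ∏ i, v (r i) i := by
        refine Finset.prod_congr rfl fun i _ => ?_
        rw [he]; simp
      have pD : D (Equiv.arrowCongr σ (Equiv.refl ι) r) = ((Equiv.Perm.sign σ : ℤ) : ℝ) * D r := by
        have hsub : (Matrix.of fun i j => v ((Equiv.arrowCongr σ (Equiv.refl ι) r) i) j)
            = (Matrix.of fun i j => v (r i) j).submatrix σ.symm id := by
          ext i j; simp [he, Matrix.submatrix_apply]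
        rw [hD]
        show (Matrix.of fun i j => v ((Equiv.arrowCongr σ (Equiv.refl ι) r) i) j).det
          = ((Equiv.Perm.sign σ : ℤ) : ℝ) * (Matrix.of fun i j => v (r i) j).det
        rw [hsub, Matrix.det_permute]
        norm_num [Equiv.Perm.sign_inv]
      rw [pw, pv, pD, Finset.prod_mul_distrib]
      have : (∏ i, w (r i)) * (((Equiv.Perm.sign σ : ℤ) : ℝ) * D r) *
          (((Equiv.Perm.sign σ : ℤ) : ℝ) * ∏ i, v (r i) i)
          = (((Equiv.Perm.sign σ : ℤ) : ℝ) * ((Equiv.Perm.sign σ : ℤ) : ℝ)) *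
            ((∏ i, w (r i)) * (∏ i, v (r i) i) * D r) := by ring
      rw [this, hsgn, one_mul]
    calc ∑ r : Fin d → ι, (∏ i, w (r i)) * (D r) ^ 2
        = ∑ r : Fin d → ι, ∑ σ : Equiv.Perm (Fin d), (∏ i, w (r i)) * D r *
            (((Equiv.Perm.sign σ : ℤ) : ℝ) * ∏ i, v (r (σ i)) i) := by
          refine Finset.sum_congr rfl fun r _ => ?_
          have hDr : D r = ∑ σ : Equiv.Perm (Fin d),
              ((Equiv.Perm.sign σ : ℤ) : ℝ) * ∏ i, v (r (σ i)) i := by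
            show (Matrix.of fun i j => v (r i) j).det = _
            rw [Matrix.det_apply']
            exact Finset.sum_congr rfl fun σ _ => by simp [Matrix.of_apply]
          rw [pow_two]
          nth_rewrite 2 [hDr]
          rw [Finset.mul_sum, Finset.mul_sum]
          exact Finset.sum_congr rfl fun σ _ => by ring
      _ = ∑ σ : Equiv.Perm (Fin d), ∑ r : Fin d → ι, (∏ i, w (r i)) * D r *
            (((Equiv.Perm.sign σ : ℤ) : ℝ) * ∏ i, v (r (σ i)) i) := Finset.sum_comm
      _ = ∑ _σ : Equiv.Perm (Fin d), ∑ r : Fin d → ι, (∏ i, w (r i) * v (r i) i) * D r :=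
          Finset.sum_congr rfl fun σ _ => hstep σ
      _ = (Nat.factorial d : ℝ) * ∑ r : Fin d → ι, (∏ i, w (r i) * v (r i) i) * D r := by
          rw [Finset.sum_const, Finset.card_univ, Fintype.card_perm, Fintype.card_fin,
            nsmul_eq_mul]
  rw [h0, hcomb, inv_mul_cancel_left₀]
  exact_mod_cast (Nat.factorial_pos d).ne'

private lemma aux_holder {t s : ℝ} (ht : 0 ≤ t) (hs : 0 ≤ s) (hts : t + s = 1)
    (u z : ι → ℝ) (hu : ∀ k, 0 ≤ u k) (hz : ∀ k, 0 ≤ z k) :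
    ∑ k, (u k) ^ t * (z k) ^ s ≤ (∑ k, u k) ^ t * (∑ k, z k) ^ s := by
  rcases ht.eq_or_lt with h | ht'
  · have hs1 : s = 1 := by linarith
    simp [← h, hs1]
  rcases hs.eq_or_lt with h | hs'
  · have ht1 : t = 1 := by linarith
    simp [← h, ht1]
  have htl : t < 1 := by linarith
  have hpq : Real.HolderConjugate t⁻¹ s⁻¹ := by
    refine Real.holderConjugate_iff.mpr ⟨?_, ?_⟩
    · exact one_lt_inv₀ ht' |>.2 htl
    · rw [inv_inv, inv_inv]; exact hts
  have H := Real.inner_le_Lp_mul_Lq_of_nonneg (s := Finset.univ)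
    (f := fun k => u k ^ t) (g := fun k => z k ^ s) hpq
    (fun i _ => Real.rpow_nonneg (hu i) t) (fun i _ => Real.rpow_nonneg (hz i) s)
  have e1 : ∀ k, (u k ^ t) ^ (t⁻¹ : ℝ) = u k := fun k => by
    rw [← Real.rpow_mul (hu k), mul_inv_cancel₀ ht'.ne', Real.rpow_one]
  have e2 : ∀ k, (z k ^ s) ^ (s⁻¹ : ℝ) = z k := fun k => by
    rw [← Real.rpow_mul (hz k), mul_inv_cancel₀ hs'.ne', Real.rpow_one]
  simp only [e1, e2, one_div, inv_inv] at H
  exact H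

private lemma aux_invsq {t s : ℝ} (u1 u2 : ℝ) (ht : 0 ≤ t) (hs : 0 ≤ s) (hts : t + s = 1)
    (h1 : 0 < u1) (h2 : 0 < u2) :
    ((t * u1 + s * u2) ^ 2)⁻¹ ≤ ((u1 ^ 2)⁻¹) ^ t * ((u2 ^ 2)⁻¹) ^ s := by
  have hg : u1 ^ t * u2 ^ s ≤ t * u1 + s * u2 :=
    Real.geom_mean_le_arith_mean2_weighted ht hs h1.le h2.le hts
  have hgpos : 0 < u1 ^ t * u2 ^ s :=
    mul_pos (Real.rpow_pos_of_pos h1 t) (Real.rpow_pos_of_pos h2 s)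
  have hsq : (u1 ^ t * u2 ^ s) ^ 2 ≤ (t * u1 + s * u2) ^ 2 :=
    pow_le_pow_left₀ hgpos.le hg 2
  have key : ((t * u1 + s * u2) ^ 2)⁻¹ ≤ ((u1 ^ t * u2 ^ s) ^ 2)⁻¹ :=
    inv_anti₀ (pow_pos hgpos 2) hsq
  refine key.trans_eq ?_
  have hrw : ∀ u : ℝ, 0 < u → ∀ tt : ℝ, (u ^ tt) ^ 2 = (u ^ 2) ^ tt := by
    intro u hu tt
    rw [← Real.rpow_natCast (u ^ tt) 2, ← Real.rpow_mul hu.le, mul_comm,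
      Real.rpow_mul hu.le, Real.rpow_natCast]
  rw [mul_pow, hrw u1 h1 t, hrw u2 h2 s, mul_inv,
    ← Real.inv_rpow (pow_nonneg h1.le 2), ← Real.inv_rpow (pow_nonneg h2.le 2)]

end DetExpand

private lemma aux_sum_mulVec {ι : Type*} [Fintype ι] (M : ι → Matrix (Fin d) (Fin d) ℝ)
    (x : Fin d → ℝ) : (∑ k, M k) *ᵥ x = ∑ k, (M k) *ᵥ x := by
  ext j
  simp only [Matrix.mulVec, dotProduct, Matrix.sum_apply, Finset.sum_apply, Finset.sum_mul]
  rw [Finset.sum_comm]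


/-- **Convexity of the log-determinant of the regularized log-barrier Hessian.**
For `c ≥ 0`, the function `θ ↦ log det(H(θ) + c I_d)` is convex on `Int K`. -/
theorem stmt18 {m d : ℕ} (A : Matrix (Fin m) (Fin d) ℝ) (b : Fin m → ℝ)
    (hbdd : ∃ R : ℝ, ∀ w : Fin d → ℝ, (∀ i, A.mulVec w i ≤ b i) → ∀ j, |w j| ≤ R)
    (c : ℝ) (hc : 0 ≤ c) :
    ConvexOn ℝ {θ : Fin d → ℝ | ∀ i, A.mulVec θ i < b i}
      (fun θ =>
        Real.log ((logBarrierHessian A b θ + c • (1 : Matrix (Fin d) (Fin d) ℝ)).det)) := by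
  classical
  obtain ⟨R, hR⟩ := hbdd
  set S : Set (Fin d → ℝ) := {θ | ∀ i, A.mulVec θ i < b i} with hSdef
  set v : Fin m ⊕ Fin d → Fin d → ℝ :=
    Sum.elim (fun i => A i) (fun j => Pi.single j 1) with hv
  set w : (Fin d → ℝ) → Fin m ⊕ Fin d → ℝ :=
    fun θ => Sum.elim (fun i => ((b i - A.mulVec θ i) ^ 2)⁻¹) (fun _ => c) with hw
  have hMrep : ∀ θ, logBarrierHessian A b θ + c • (1 : Matrix (Fin d) (Fin d) ℝ)
      = ∑ k, w θ k • Matrix.vecMulVec (v k) (v k) := by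
    intro θ
    rw [Fintype.sum_sum_type]
    simp only [hv, hw, Sum.elim_inl, Sum.elim_inr]
    rw [logBarrierHessian]
    congr 1
    rw [← Finset.smul_sum, aux_sum_single]
  -- nonnegativity of weights
  have hw_nonneg : ∀ θ k, 0 ≤ w θ k := by
    rintro θ (i | j)
    · exact inv_nonneg.2 (sq_nonneg _)
    · exact hc
  -- convexity of S
  have hconv : Convex ℝ S := by
    have hset : S = ⋂ i, {θ : Fin d → ℝ | A.mulVec θ i < b i} := by
      ext θ; simp [hSdef, Set.mem_iInter]
    rw [hset]
    refine convex_iInter fun i => convex_halfSpace_lt ?_ (b i)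
    exact ⟨fun p q => by simp [Matrix.mulVec_add], fun r p => by simp [Matrix.mulVec_smul]⟩
  -- positivity of determinant on S
  have hdet_pos : ∀ θ ∈ S, 0 < (logBarrierHessian A b θ + c • (1 : Matrix (Fin d) (Fin d) ℝ)).det := by
    intro θ hθ
    have hθ' : ∀ i, A.mulVec θ i < b i := hθ
    have hPD : (logBarrierHessian A b θ + c • (1 : Matrix (Fin d) (Fin d) ℝ)).PosDef := by
      rw [hMrep θ, Matrix.posDef_iff_dotProduct_mulVec]
      constructor
      · show (∑ k, w θ k • Matrix.vecMulVec (v k) (v k))ᴴ = _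
        ext i j
        simp only [Matrix.conjTranspose_apply, Matrix.sum_apply, Matrix.smul_apply,
          Matrix.vecMulVec_apply, smul_eq_mul, star_trivial]
        exact Finset.sum_congr rfl fun k _ => by ring
      · intro x hx
        have hquad : star x ⬝ᵥ ((∑ k, w θ k • Matrix.vecMulVec (v k) (v k)) *ᵥ x)
            = ∑ k, w θ k * (v k ⬝ᵥ x) ^ 2 := by
          rw [aux_sum_mulVec]
          have hterm : ∀ k, (w θ k • Matrix.vecMulVec (v k) (v k)) *ᵥ x
              = (w θ k * (v k ⬝ᵥ x)) • v k := fun k => by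
            rw [Matrix.smul_mulVec, aux_vecMulVec_mulVec, smul_smul]
          simp only [hterm]
          have hds : ∀ f : (Fin m ⊕ Fin d) → Fin d → ℝ,
              star x ⬝ᵥ (∑ k, f k) = ∑ k, x ⬝ᵥ f k := by
            intro f
            simp only [star_trivial, dotProduct, Finset.sum_apply, Finset.mul_sum]
            exact Finset.sum_comm
          rw [hds]
          refine Finset.sum_congr rfl fun k _ => ?_
          rw [dotProduct_smul, smul_eq_mul, dotProduct_comm x (v k)]
          ring
        rw [hquad]
        -- A x ≠ 0
        have hAx : A.mulVec x ≠ 0 := by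
          intro h0
          obtain ⟨j, hj⟩ := Function.ne_iff.1 hx
          have hj' : x j ≠ 0 := by simpa using hj
          have hRθ : |θ j| ≤ R := hR θ (fun i => (hθ' i).le) j
          set r : ℝ := (R + |θ j| + 1) / |x j| with hrdef
          have habs : (0:ℝ) < |x j| := abs_pos.2 hj'
          have hmem : ∀ i, A.mulVec (θ + r • x) i ≤ b i := by
            intro i
            rw [Matrix.mulVec_add, Matrix.mulVec_smul]
            simp [h0, (hθ' i).le]
          have hb2 : |θ j + r * x j| ≤ R := by
            have := hR _ hmem j
            simpa using this
          have hr_nonneg : 0 ≤ r := by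
            apply div_nonneg _ habs.le
            have : (0:ℝ) ≤ |θ j| := abs_nonneg _
            linarith
          have hrx : |r * x j| = R + |θ j| + 1 := by
            rw [abs_mul, abs_of_nonneg hr_nonneg, hrdef, div_mul_cancel₀ _ habs.ne']
          have htri : |r * x j| ≤ |θ j + r * x j| + |θ j| := by
            have := abs_sub_abs_le_abs_sub (θ j + r * x j) (θ j)
            have h2 := abs_add_le (θ j + r * x j - θ j) (θ j)
            have h3 : θ j + r * x j - θ j = r * x j := by ring
            calc |r * x j| = |θ j + r * x j - θ j| := by rw [h3]
              _ ≤ |θ j + r * x j| + |θ j| := abs_sub _ _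
          linarith [hrx, htri, hb2]
        obtain ⟨i, hi⟩ := Function.ne_iff.1 hAx
        have hi' : A.mulVec x i ≠ 0 := by simpa using hi
        refine Finset.sum_pos' (fun k _ => mul_nonneg (hw_nonneg θ k) (sq_nonneg _))
          ⟨Sum.inl i, Finset.mem_univ _, ?_⟩
        have h1 : 0 < w θ (Sum.inl i) := by
          simp only [hw, Sum.elim_inl]
          exact inv_pos.2 (pow_pos (sub_pos.2 (hθ' i)) 2)
        have h2 : 0 < (v (Sum.inl i) ⬝ᵥ x) ^ 2 := by
          have hvv : v (Sum.inl i) ⬝ᵥ x = A.mulVec x i := rfl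
          rw [hvv]
          exact lt_of_le_of_ne (sq_nonneg _) (Ne.symm (pow_ne_zero 2 hi'))
        exact mul_pos h1 h2
    exact hPD.det_pos
  -- main convexity inequality
  refine ⟨hconv, ?_⟩
  intro x hx y hy a bb ha hb hab
  set z := a • x + bb • y with hz
  have hzS : z ∈ S := hconv hx hy ha hb hab
  have hx' : ∀ i, A.mulVec x i < b i := hx
  have hy' : ∀ i, A.mulVec y i < b i := hy
  have hw_mid : ∀ k, w z k ≤ (w x k) ^ a * (w y k) ^ bb := by
    rintro (i | j)
    · have hsx : 0 < b i - A.mulVec x i := sub_pos.2 (hx' i)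
      have hsy : 0 < b i - A.mulVec y i := sub_pos.2 (hy' i)
      have hmid : b i - A.mulVec z i
          = a * (b i - A.mulVec x i) + bb * (b i - A.mulVec y i) := by
        have hAz : A.mulVec z i = a * A.mulVec x i + bb * A.mulVec y i := by
          rw [hz, Matrix.mulVec_add, Matrix.mulVec_smul, Matrix.mulVec_smul]
          simp
        rw [hAz]
        linear_combination (-(b i)) * hab
      show ((b i - A.mulVec z i) ^ 2)⁻¹ ≤
        (((b i - A.mulVec x i) ^ 2)⁻¹) ^ a * (((b i - A.mulVec y i) ^ 2)⁻¹) ^ bb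
      rw [hmid]
      exact aux_invsq _ _ ha hb hab hsx hsy
    · show c ≤ c ^ a * c ^ bb
      have hcc : c ^ a * c ^ bb = c := by
        rw [← Real.rpow_add' hc (by rw [hab]; exact one_ne_zero), hab, Real.rpow_one]
      exact hcc.ge
  set D : (Fin d → (Fin m ⊕ Fin d)) → ℝ :=
    fun r => (Matrix.of fun i j => v (r i) j).det with hD
  set q : (Fin d → ℝ) → (Fin d → (Fin m ⊕ Fin d)) → ℝ :=
    fun θ r => (∏ i, w θ (r i)) * (D r) ^ 2 with hq
  have hdetrep : ∀ θ, (logBarrierHessian A b θ + c • (1 : Matrix (Fin d) (Fin d) ℝ)).det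
      = ((Nat.factorial d : ℝ))⁻¹ * ∑ r, q θ r := by
    intro θ
    simp only [hq, hD]
    rw [hMrep θ, aux_det_expand]
  have hq_nonneg : ∀ θ r, 0 ≤ q θ r := fun θ r =>
    mul_nonneg (Finset.prod_nonneg fun i _ => hw_nonneg θ _) (sq_nonneg _)
  have hq_mid : ∀ r, q z r ≤ (q x r) ^ a * (q y r) ^ bb := by
    intro r
    have hprodx : (0:ℝ) ≤ ∏ i, w x (r i) := Finset.prod_nonneg fun i _ => hw_nonneg x _
    have hprody : (0:ℝ) ≤ ∏ i, w y (r i) := Finset.prod_nonneg fun i _ => hw_nonneg y _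
    have step1 : ∏ i, w z (r i) ≤ ∏ i, (w x (r i)) ^ a * (w y (r i)) ^ bb :=
      Finset.prod_le_prod (fun i _ => hw_nonneg z _) (fun i _ => hw_mid _)
    have step2 : ∏ i, (w x (r i)) ^ a * (w y (r i)) ^ bb
        = (∏ i, w x (r i)) ^ a * (∏ i, w y (r i)) ^ bb := by
      rw [Finset.prod_mul_distrib,
        ← Real.finset_prod_rpow _ _ (fun i _ => hw_nonneg x _) a,
        ← Real.finset_prod_rpow _ _ (fun i _ => hw_nonneg y _) bb]
    have step3 : (D r) ^ 2 = ((D r) ^ 2) ^ a * ((D r) ^ 2) ^ bb := by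
      rw [← Real.rpow_add' (sq_nonneg _) (by rw [hab]; exact one_ne_zero), hab, Real.rpow_one]
    calc q z r ≤ ((∏ i, w x (r i)) ^ a * (∏ i, w y (r i)) ^ bb) * (D r) ^ 2 :=
          mul_le_mul_of_nonneg_right (step1.trans_eq step2) (sq_nonneg _)
      _ = (q x r) ^ a * (q y r) ^ bb := by
          simp only [hq]
          rw [Real.mul_rpow hprodx (sq_nonneg _), Real.mul_rpow hprody (sq_nonneg _)]
          nth_rewrite 1 [step3]
          ring
  have hfpos : (0:ℝ) < ((Nat.factorial d : ℝ))⁻¹ := by positivity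
  have hsumx : (0:ℝ) ≤ ∑ r, q x r := Finset.sum_nonneg fun r _ => hq_nonneg x r
  have hsumy : (0:ℝ) ≤ ∑ r, q y r := Finset.sum_nonneg fun r _ => hq_nonneg y r
  have hdet_ineq : (logBarrierHessian A b z + c • (1 : Matrix (Fin d) (Fin d) ℝ)).det
      ≤ (logBarrierHessian A b x + c • (1 : Matrix (Fin d) (Fin d) ℝ)).det ^ a *
        (logBarrierHessian A b y + c • (1 : Matrix (Fin d) (Fin d) ℝ)).det ^ bb := by
    rw [hdetrep z, hdetrep x, hdetrep y]
    have hchain : ∑ r, q z r ≤ (∑ r, q x r) ^ a * (∑ r, q y r) ^ bb := by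
      calc ∑ r, q z r ≤ ∑ r, (q x r) ^ a * (q y r) ^ bb :=
            Finset.sum_le_sum fun r _ => hq_mid r
        _ ≤ _ := aux_holder ha hb hab _ _ (fun r => hq_nonneg x r) (fun r => hq_nonneg y r)
    have hfac : ((Nat.factorial d : ℝ))⁻¹
        = ((Nat.factorial d : ℝ))⁻¹ ^ a * ((Nat.factorial d : ℝ))⁻¹ ^ bb := by
      rw [← Real.rpow_add' hfpos.le (by rw [hab]; exact one_ne_zero), hab, Real.rpow_one]
    calc ((Nat.factorial d : ℝ))⁻¹ * ∑ r, q z r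
        ≤ ((Nat.factorial d : ℝ))⁻¹ * ((∑ r, q x r) ^ a * (∑ r, q y r) ^ bb) :=
          mul_le_mul_of_nonneg_left hchain hfpos.le
      _ = (((Nat.factorial d : ℝ))⁻¹ * ∑ r, q x r) ^ a *
          (((Nat.factorial d : ℝ))⁻¹ * ∑ r, q y r) ^ bb := by
          rw [Real.mul_rpow hfpos.le hsumx, Real.mul_rpow hfpos.le hsumy]
          nth_rewrite 1 [hfac]
          ring
  have hpx := hdet_pos x hx
  have hpy := hdet_pos y hy
  have hpz := hdet_pos z hzS
  simp only [smul_eq_mul]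
  calc Real.log ((logBarrierHessian A b z + c • (1 : Matrix (Fin d) (Fin d) ℝ)).det)
      ≤ Real.log ((logBarrierHessian A b x + c • (1 : Matrix (Fin d) (Fin d) ℝ)).det ^ a *
          (logBarrierHessian A b y + c • (1 : Matrix (Fin d) (Fin d) ℝ)).det ^ bb) :=
        Real.log_le_log hpz hdet_ineq
    _ = a * Real.log ((logBarrierHessian A b x + c • (1 : Matrix (Fin d) (Fin d) ℝ)).det) +
        bb * Real.log ((logBarrierHessian A b y + c • (1 : Matrix (Fin d) (Fin d) ℝ)).det) := by
        rw [Real.log_mul (Real.rpow_pos_of_pos hpx a).ne' (Real.rpow_pos_of_pos hpy bb).ne',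
          Real.log_rpow hpx, Real.log_rpow hpy]
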